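/- The second simple shortest path distance equals the minimum replacement distance over edges of one fixed shortest path: if P is a shortest simple path from s to t in G, then d_2(s,t) = min over e ∈ P of d(s,t,e), where d_2(s,t) is the minimum weight of a simple s-t path differing from P in at least one edge. -/

import Mathlib

open scoped ENNReal

variable {V : Type*}

/-- `p` is a walk/path from `u` to `v` using edges of `E`, given as its list of vertices. -/
def IsPath (E : Set (V × V)) (u v : V) (p : List V) : Prop :=
  p.head? = some u ∧ p.getLast? = some v ∧ List.Chain' (fun a b => (a, b) ∈ E) p

/-- The list of (directed) edges traversed by a path `p`. -/
def edgesOf (p : List V) : List (V × V) := p.zip p.tail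

/-- Total weight of a path. -/
noncomputable def pweight (w : V × V → ℝ≥0∞) (p : List V) : ℝ≥0∞ := ((edgesOf p).map w).sum

/-- Number of edges (hops) of a path. -/
def hops (p : List V) : ℕ := p.length - 1

/-- Shortest-path distance from `u` to `v`. -/
noncomputable def gdist (E : Set (V × V)) (w : V × V → ℝ≥0∞) (u v : V) : ℝ≥0∞ :=
  sInf {c | ∃ p, IsPath E u v p ∧ pweight w p = c}

/-- Replacement distance: shortest-path distance from `u` to `v` avoiding edge `e`. -/
noncomputable def dRepl (E : Set (V × V)) (w : V × V → ℝ≥0∞) (u v : V) (e : V × V) : ℝ≥0∞ :=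
  sInf {c | ∃ p, IsPath E u v p ∧ e ∉ edgesOf p ∧ pweight w p = c}

/-- `h`-hop-limited replacement distance from `u` to `v` avoiding edge `e`. -/
noncomputable def dh (E : Set (V × V)) (w : V × V → ℝ≥0∞) (h : ℕ) (u v : V) (e : V × V) :
    ℝ≥0∞ :=
  sInf {c | ∃ p, IsPath E u v p ∧ hops p ≤ h ∧ e ∉ edgesOf p ∧ pweight w p = c}


lemma edgesOf_cons_cons (a b : V) (l : List V) :
    edgesOf (a :: b :: l) = (a, b) :: edgesOf (b :: l) := rfl

lemma mem_of_edge {l : List V} {e : V × V} (h : e ∈ edgesOf l) : e.1 ∈ l ∧ e.2 ∈ l.tail :=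
  List.of_mem_zip h

lemma chain'_iff_edges {R : V → V → Prop} : ∀ (l : List V),
    List.Chain' R l ↔ ∀ e ∈ edgesOf l, R e.1 e.2
  | [] => by simp [edgesOf]; exact List.isChain_nil
  | [a] => by simp [edgesOf]; exact List.isChain_singleton a
  | a :: b :: l => by
    have ih := chain'_iff_edges (R := R) (b :: l)
    simp only [List.Chain'] at ih ⊢
    rw [List.isChain_cons_cons, ih, edgesOf_cons_cons]
    simp

lemma head?_append_cons (a : List V) (x : V) (l l' : List V) :
    (a ++ x :: l).head? = (a ++ x :: l').head? := by cases a <;> simp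

lemma getLast?_append_cons (l : List V) (x : V) (c : List V) :
    (l ++ x :: c).getLast? = (x :: c).getLast? := by
  rw [List.getLast?_append]
  cases h : (x :: c).getLast? with
  | none => exact absurd (List.getLast?_eq_none_iff.mp h) (by simp)
  | some a => rfl

lemma edgesOf_append : ∀ (l₁ : List V) (x : V) (l₂ : List V),
    edgesOf (l₁ ++ x :: l₂) = edgesOf (l₁ ++ [x]) ++ edgesOf (x :: l₂)
  | [], x, l₂ => by simp [edgesOf]
  | [a], x, l₂ => by
    show edgesOf (a :: x :: l₂) = edgesOf [a, x] ++ edgesOf (x :: l₂)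
    rw [edgesOf_cons_cons]; rfl
  | a :: b :: l₁, x, l₂ => by
    have h := edgesOf_append (b :: l₁) x l₂
    simp only [List.cons_append] at *
    rw [edgesOf_cons_cons, h, edgesOf_cons_cons]
    rfl

lemma pweight_split (w : V × V → ℝ≥0∞) (l₁ : List V) (x : V) (l₂ : List V) :
    pweight w (l₁ ++ x :: l₂) = pweight w (l₁ ++ [x]) + pweight w (x :: l₂) := by
  simp only [pweight]; rw [edgesOf_append]; simp

lemma exists_dup_split : ∀ (p : List V), ¬ p.Nodup → ∃ a x b c, p = a ++ x :: (b ++ x :: c)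
  | [], h => absurd List.nodup_nil h
  | v :: l, h => by
    rw [List.nodup_cons] at h
    push_neg at h
    by_cases hv : v ∈ l
    · obtain ⟨b, c, rfl⟩ := List.append_of_mem hv
      exact ⟨[], v, b, c, rfl⟩
    · obtain ⟨a, x, b, c, rfl⟩ := exists_dup_split l (h hv)
      exact ⟨v :: a, x, b, c, rfl⟩

lemma simplify (w : V × V → ℝ≥0∞) : ∀ (n : ℕ) (p : List V), p.length ≤ n →
    ∃ q : List V, q.Nodup ∧ q.head? = p.head? ∧ q.getLast? = p.getLast? ∧
      (∀ f ∈ edgesOf q, f ∈ edgesOf p) ∧ pweight w q ≤ pweight w p := by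
  intro n
  induction n with
  | zero =>
    intro p hp
    obtain rfl : p = [] := List.length_eq_zero_iff.mp (Nat.le_zero.mp hp)
    exact ⟨[], List.nodup_nil, rfl, rfl, fun f hf => hf, le_rfl⟩
  | succ n ih =>
    intro p hp
    by_cases hnd : p.Nodup
    · exact ⟨p, hnd, rfl, rfl, fun f hf => hf, le_rfl⟩
    · obtain ⟨a, x, b, c, rfl⟩ := exists_dup_split p hnd
      have hlen : (a ++ x :: c).length ≤ n := by
        simp only [List.length_append, List.length_cons] at hp ⊢
        omega
      obtain ⟨q, h1, h2, h3, h4, h5⟩ := ih (a ++ x :: c) hlen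
      refine ⟨q, h1, ?_, ?_, ?_, ?_⟩
      · rw [h2, head?_append_cons a x c (b ++ x :: c)]
      · rw [h3, getLast?_append_cons a x c, getLast?_append_cons a x (b ++ x :: c),
          show x :: (b ++ x :: c) = (x :: b) ++ x :: c from rfl,
          getLast?_append_cons (x :: b) x c]
      · intro f hf
        have hm := h4 f hf
        rw [edgesOf_append a x c] at hm
        rw [edgesOf_append a x (b ++ x :: c),
          show x :: (b ++ x :: c) = (x :: b) ++ x :: c from rfl,
          edgesOf_append (x :: b) x c]
        rcases List.mem_append.mp hm with h | h
        · exact List.mem_append.mpr (Or.inl h)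
        · exact List.mem_append.mpr (Or.inr (List.mem_append.mpr (Or.inr h)))
      · refine h5.trans ?_
        rw [pweight_split w a x c, pweight_split w a x (b ++ x :: c),
          show x :: (b ++ x :: c) = (x :: b) ++ x :: c from rfl,
          pweight_split w (x :: b) x c]
        exact add_le_add_right (le_add_left le_rfl) _

lemma single_of_nodup {q : List V} {s : V} (hnd : q.Nodup) (h1 : q.head? = some s)
    (h2 : q.getLast? = some s) : q = [s] := by
  cases q with
  | nil => simp at h1
  | cons a l =>
    obtain rfl : s = a := by simpa using h1.symm
    cases l with
    | nil => rfl
    | cons b l' =>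
      exfalso
      rw [List.getLast?_cons_cons] at h2
      exact (List.nodup_cons.mp hnd).1 (List.mem_of_getLast? h2)

lemma first_edge {q : List V} {s v : V} (hnd : q.Nodup) (h1 : q.head? = some s)
    (he : (s, v) ∈ edgesOf q) : ∃ qt, q = s :: qt ∧ qt.head? = some v := by
  cases q with
  | nil => simp at h1
  | cons a l =>
    obtain rfl : s = a := by simpa using h1.symm
    cases l with
    | nil => simp [edgesOf] at he
    | cons b l' =>
      rw [edgesOf_cons_cons] at he
      rcases List.mem_cons.mp he with h | h
      · obtain ⟨-, rfl⟩ := Prod.ext_iff.mp h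
        exact ⟨v :: l', rfl, rfl⟩
      · exact absurd (mem_of_edge h).1 (List.nodup_cons.mp hnd).1

lemma eq_of_edges_subset : ∀ (P Q : List V) (s t : V), P.Nodup → Q.Nodup →
    P.head? = some s → P.getLast? = some t → Q.head? = some s → Q.getLast? = some t →
    (∀ f ∈ edgesOf P, f ∈ edgesOf Q) → P = Q := by
  intro P
  induction P with
  | nil => intro Q s t _ _ h; simp at h
  | cons a P' ih =>
    intro Q s t hPnd hQnd hPh hPl hQh hQl hsub
    obtain rfl : s = a := by simpa using hPh.symm
    cases P' with
    | nil =>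
      have hst : s = t := by simpa using hPl
      rw [← hst] at hQl
      exact (single_of_nodup hQnd hQh hQl).symm
    | cons v P'' =>
      have hedge : (s, v) ∈ edgesOf Q :=
        hsub (s, v) (by rw [edgesOf_cons_cons]; exact List.mem_cons_self)
      obtain ⟨qt, rfl, hqth⟩ := first_edge hQnd hQh hedge
      obtain ⟨u, qt', rfl⟩ : ∃ u qt', qt = u :: qt' := by
        cases qt with
        | nil => simp at hqth
        | cons u qt' => exact ⟨u, qt', rfl⟩
      have hsP : s ∉ v :: P'' := (List.nodup_cons.mp hPnd).1
      have key : ∀ f ∈ edgesOf (v :: P''), f ∈ edgesOf (u :: qt') := by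
        intro f hf
        have hfQ := hsub f (by rw [edgesOf_cons_cons]; exact List.mem_cons_of_mem _ hf)
        rw [edgesOf_cons_cons] at hfQ
        rcases List.mem_cons.mp hfQ with h | h
        · exfalso
          have hf1 : f.1 ∈ v :: P'' := (mem_of_edge hf).1
          rw [h] at hf1
          exact hsP hf1
        · exact h
      have heq := ih (u :: qt') v t (List.nodup_cons.mp hPnd).2
        (List.nodup_cons.mp hQnd).2 rfl
        (by rw [← hPl, List.getLast?_cons_cons]) hqth
        (by rw [← hQl, List.getLast?_cons_cons]) key
      rw [heq]


/-- If `P` is a shortest simple `s`-`t` path, then the second simple shortest path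
distance `d₂(s,t)` (minimum weight of a simple `s`-`t` path whose edge set differs from that of
`P`) equals `min_{e ∈ P} d(s,t,e)`. -/
theorem stmt12 (E : Set (V × V)) (w : V × V → ℝ≥0∞) (s t : V) (P : List V)
    (hP : IsPath E s t P) (hsimple : P.Nodup) (hshort : pweight w P = gdist E w s t) :
    sInf {c | ∃ Q, IsPath E s t Q ∧ Q.Nodup ∧
        {f | f ∈ edgesOf Q} ≠ {f | f ∈ edgesOf P} ∧ pweight w Q = c} =
      ⨅ e ∈ edgesOf P, dRepl E w s t e := by
  obtain ⟨hPh, hPl, hPc⟩ := hP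
  apply le_antisymm
  · apply le_iInf₂
    intro e he
    apply le_sInf
    rintro c ⟨p, ⟨hph, hpl, hpc⟩, hep, rfl⟩
    obtain ⟨q, hqnd, hqh, hql, hqsub, hqw⟩ := simplify w p.length p le_rfl
    refine le_trans (sInf_le ⟨q, ⟨hqh.trans hph, hql.trans hpl, ?_⟩, hqnd, ?_, rfl⟩) hqw
    · exact (chain'_iff_edges q).mpr fun f hf => (chain'_iff_edges p).mp hpc f (hqsub f hf)
    · intro hset
      have heq' : e ∈ edgesOf q := (Set.ext_iff.mp hset e).mpr he
      exact hep (hqsub e heq')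
  · apply le_sInf
    rintro c ⟨Q, hQ, hQnd, hne, rfl⟩
    have hex : ∃ e ∈ edgesOf P, e ∉ edgesOf Q := by
      by_contra h
      push_neg at h
      have heq := eq_of_edges_subset P Q s t hsimple hQnd hPh hPl hQ.1 hQ.2.1 h
      exact hne (by rw [heq])
    obtain ⟨e, heP, heQ⟩ := hex
    exact le_trans (iInf₂_le e heP) (sInf_le ⟨Q, hQ, heQ, rfl⟩)
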